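/- For every positive integer k, Σ_{i=1}^∞ h_i/(i(k+i)) = 2·ln(2)·h_k/k + (1/k)·Σ_{i=1}^k H_{i−1}/(2i−1). -/

import Mathlib

open scoped BigOperators

/-- Odd harmonic number `h_k^{(n)} = ∑_{i=1}^k 1/(2i-1)^n`. -/
noncomputable def h (n k : ℕ) : ℝ := ∑ i ∈ Finset.range k, (1 : ℝ) / (2 * (i : ℝ) + 1) ^ n

/-- Generalized harmonic number `H_k^{(n)} = ∑_{i=1}^k 1/i^n`. -/
noncomputable def H (n k : ℕ) : ℝ := ∑ i ∈ Finset.range k, (1 : ℝ) / ((i : ℝ) + 1) ^ n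

/-- Riemann zeta value at a positive integer `m ≥ 2`: `ζ(m) = ∑_{n≥1} 1/n^m`. -/
noncomputable def Z (m : ℕ) : ℝ := ∑' n : ℕ+, (1 : ℝ) / ((n : ℕ) : ℝ) ^ m

open Filter Finset Real

private lemma tel_partial (g : ℕ → ℝ) (m N : ℕ) :
    ∑ j ∈ range N, (g j - g (j + m)) = ∑ j ∈ range m, g j - ∑ j ∈ range m, g (N + j) := by
  have h1 := Finset.sum_range_add g N m
  have h2 := Finset.sum_range_add g m N
  rw [add_comm m N] at h2
  have h3 : ∑ j ∈ range N, g (j + m) = ∑ j ∈ range N, g (m + j) :=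
    Finset.sum_congr rfl fun j _ => by rw [add_comm]
  rw [Finset.sum_sub_distrib, h3]
  linarith

private lemma hasSum_tel {g : ℕ → ℝ} (m : ℕ) (hpos : ∀ j, 0 ≤ g j)
    (hmono : ∀ j, g (j + m) ≤ g j) (hlim : Filter.Tendsto g atTop (nhds 0)) :
    HasSum (fun j => g j - g (j + m)) (∑ j ∈ range m, g j) := by
  have hnn : ∀ j, 0 ≤ g j - g (j + m) := fun j => sub_nonneg.2 (hmono j)
  have hbd : ∀ N, ∑ j ∈ range N, (g j - g (j + m)) ≤ ∑ j ∈ range m, g j := by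
    intro N
    rw [tel_partial]
    have h0 : 0 ≤ ∑ j ∈ range m, g (N + j) := Finset.sum_nonneg fun j _ => hpos _
    linarith
  have hs := summable_of_sum_range_le hnn hbd
  rw [hs.hasSum_iff_tendsto_nat]
  have htail : Tendsto (fun N => ∑ j ∈ range m, g (N + j)) atTop (nhds 0) := by
    have h := tendsto_finset_sum (range m)
      (fun j _ => hlim.comp (tendsto_add_atTop_nat j) : ∀ j ∈ range m,
        Tendsto (fun N : ℕ => g (N + j)) atTop (nhds 0))
    simpa using h
  have h := (tendsto_const_nhds (x := ∑ j ∈ range m, g j) (f := atTop)).sub htail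
  rw [sub_zero] at h
  exact h.congr fun N => (tel_partial g m N).symm

private noncomputable def HH (N : ℕ) : ℝ := ∑ i ∈ range N, (1:ℝ)/((i:ℝ)+1)

private lemma HH_eq (N : ℕ) : HH N = (harmonic N : ℝ) := by
  simp only [HH, harmonic, Rat.cast_sum]
  refine Finset.sum_congr rfl fun i _ => ?_
  push_cast
  rw [one_div]

private lemma pair_sum (N : ℕ) :
    ∑ j ∈ range N, ((1:ℝ)/(2*(j:ℝ)+1) - 1/(2*(j:ℝ)+2)) = HH (2*N) - HH N := by
  induction N with
  | zero => simp [HH]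
  | succ n ih =>
    rw [Finset.sum_range_succ, ih]
    have h2 : 2*(n+1) = (2*n+1)+1 := by ring
    rw [h2]
    simp only [HH, Finset.sum_range_succ]
    push_cast
    have d1 : (2*(n:ℝ)+1) ≠ 0 := by positivity
    have d2 : (2*(n:ℝ)+2) ≠ 0 := by positivity
    have d3 : ((n:ℝ)+1) ≠ 0 := by positivity
    field_simp
    ring

private lemma tendsto_pair :
    Tendsto (fun N : ℕ => HH (2*N) - HH N) atTop (nhds (Real.log 2)) := by
  have hγ := Real.tendsto_harmonic_sub_log
  have h2N : Tendsto (fun N : ℕ => 2*N) atTop atTop :=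
    tendsto_atTop_mono (fun n => by simp; omega) tendsto_id
  have hg2 := hγ.comp h2N
  have key := (hg2.sub hγ).add (tendsto_const_nhds (x := Real.log 2) (f := atTop))
  rw [sub_self, zero_add] at key
  refine key.congr' ?_
  filter_upwards [eventually_ge_atTop 1] with N hN
  have hN0 : ((N:ℕ):ℝ) ≠ 0 := by
    have : (1:ℝ) ≤ (N:ℝ) := by exact_mod_cast hN
    linarith
  have hlog : Real.log ((2*N:ℕ):ℝ) = Real.log 2 + Real.log N := by
    push_cast
    rw [Real.log_mul two_ne_zero hN0]
  simp only [Function.comp]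
  rw [HH_eq, HH_eq, hlog]
  ring

private lemma hasSum_log2_pairs :
    HasSum (fun j : ℕ => (1:ℝ)/(2*(j:ℝ)+1) - 1/(2*(j:ℝ)+2)) (Real.log 2) := by
  have hnn : ∀ j : ℕ, 0 ≤ (1:ℝ)/(2*(j:ℝ)+1) - 1/(2*(j:ℝ)+2) := by
    intro j
    have : (1:ℝ)/(2*(j:ℝ)+2) ≤ 1/(2*(j:ℝ)+1) := by
      apply one_div_le_one_div_of_le <;> [positivity; linarith]
    linarith
  have hmono : Monotone (fun N => ∑ j ∈ range N,
      ((1:ℝ)/(2*(j:ℝ)+1) - 1/(2*(j:ℝ)+2))) := by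
    apply monotone_nat_of_le_succ
    intro n
    rw [Finset.sum_range_succ]
    linarith [hnn n]
  have htd : Tendsto (fun N => ∑ j ∈ range N,
      ((1:ℝ)/(2*(j:ℝ)+1) - 1/(2*(j:ℝ)+2))) atTop (nhds (Real.log 2)) :=
    tendsto_pair.congr fun N => (pair_sum N).symm
  have hbd : ∀ N, ∑ j ∈ range N, ((1:ℝ)/(2*(j:ℝ)+1) - 1/(2*(j:ℝ)+2)) ≤ Real.log 2 :=
    fun N => hmono.ge_of_tendsto htd N
  have hs := summable_of_sum_range_le hnn hbd
  rw [hs.hasSum_iff_tendsto_nat]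
  exact htd



private lemma tendsto_inv_shift (a : ℝ) (ha : 0 ≤ a) :
    Tendsto (fun i : ℕ => (1:ℝ)/(a+(i:ℝ)+1)) atTop (nhds 0) := by
  have h1 : Tendsto (fun i : ℕ => a+(i:ℝ)+1) atTop atTop := by
    apply tendsto_atTop_add_const_right
    apply tendsto_atTop_add_const_left
    exact tendsto_natCast_atTop_atTop
  simpa [one_div, Pi.inv_def] using h1.inv_tendsto_atTop

/-- Lemma A: column sums -/
private lemma hasSum_col (K : ℕ) (hK : 0 < K) (j : ℕ) :
    HasSum (fun i : ℕ => (1:ℝ)/((((i+j:ℕ):ℝ)+1)*((K:ℝ)+(((i+j:ℕ):ℝ)+1))))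
      ((1/(K:ℝ)) * ∑ m ∈ range K, (1:ℝ)/((j:ℝ)+(m:ℝ)+1)) := by
  have hKR : (0:ℝ) < K := by exact_mod_cast hK
  have base := hasSum_tel (g := fun i : ℕ => (1/(K:ℝ)) * ((1:ℝ)/((j:ℝ)+(i:ℝ)+1))) K
    (fun i => by positivity)
    (fun i => by
      have : (1:ℝ)/((j:ℝ)+((i+K:ℕ):ℝ)+1) ≤ 1/((j:ℝ)+(i:ℝ)+1) := by
        apply one_div_le_one_div_of_le
        · positivity
        · push_cast; linarith
      have h1K : 0 ≤ 1/(K:ℝ) := by positivity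
      exact mul_le_mul_of_nonneg_left this h1K)
    (by simpa using ((tendsto_inv_shift (j:ℝ) (by positivity)).const_mul (1/(K:ℝ))))
  have heq : ∀ i : ℕ, (1/(K:ℝ)) * ((1:ℝ)/((j:ℝ)+(i:ℝ)+1))
        - (1/(K:ℝ)) * ((1:ℝ)/((j:ℝ)+((i+K:ℕ):ℝ)+1))
      = (1:ℝ)/((((i+j:ℕ):ℝ)+1)*((K:ℝ)+(((i+j:ℕ):ℝ)+1))) := by
    intro i
    push_cast
    have d1 : ((j:ℝ)+(i:ℝ)+1) ≠ 0 := by positivity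
    have d2 : ((j:ℝ)+((i:ℝ)+(K:ℝ))+1) ≠ 0 := by positivity
    have d3 : ((i:ℝ)+(j:ℝ)+1) ≠ 0 := by positivity
    have d4 : ((K:ℝ)+((i:ℝ)+(j:ℝ)+1)) ≠ 0 := by positivity
    field_simp
    ring
  have hval : ∑ i ∈ range K, (1/(K:ℝ)) * ((1:ℝ)/((j:ℝ)+(i:ℝ)+1))
      = (1/(K:ℝ)) * ∑ m ∈ range K, (1:ℝ)/((j:ℝ)+(m:ℝ)+1) := by
    rw [Finset.mul_sum]
  rw [← hval]
  convert base using 1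
  exact funext fun i => (heq i).symm

/-- Lemma B: the classical inner sum -/
private lemma hasSum_inner (m : ℕ) :
    HasSum (fun j : ℕ => (1:ℝ)/((2*(j:ℝ)+1)*((j:ℝ)+(m:ℝ)+1)))
      ((2*Real.log 2 + H 1 m)/(2*(m:ℝ)+1)) := by
  have hHm : HasSum (fun j : ℕ => (1:ℝ)/((j:ℝ)+1) - 1/(((j+m:ℕ):ℝ)+1)) (H 1 m) := by
    have base := hasSum_tel (g := fun j : ℕ => (1:ℝ)/((j:ℝ)+1)) m
      (fun j => by positivity)
      (fun j => by
        apply one_div_le_one_div_of_le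
        · positivity
        · push_cast; linarith)
      (by simpa [add_comm] using tendsto_inv_shift 0 le_rfl)
    have : ∑ j ∈ range m, (1:ℝ)/((j:ℝ)+1) = H 1 m := by
      simp [H, pow_one]
    rwa [this] at base
  have comb := ((hasSum_log2_pairs.mul_left 2).add hHm).mul_left (1/(2*(m:ℝ)+1))
  have heq : ∀ j : ℕ, (1/(2*(m:ℝ)+1)) * (2*((1:ℝ)/(2*(j:ℝ)+1) - 1/(2*(j:ℝ)+2))
        + ((1:ℝ)/((j:ℝ)+1) - 1/(((j+m:ℕ):ℝ)+1)))
      = (1:ℝ)/((2*(j:ℝ)+1)*((j:ℝ)+(m:ℝ)+1)) := by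
    intro j
    push_cast
    have d1 : (2*(m:ℝ)+1) ≠ 0 := by positivity
    have d2 : (2*(j:ℝ)+1) ≠ 0 := by positivity
    have d3 : (2*(j:ℝ)+2) ≠ 0 := by positivity
    have d4 : ((j:ℝ)+1) ≠ 0 := by positivity
    have d5 : ((j:ℝ)+(m:ℝ)+1) ≠ 0 := by positivity
    field_simp
    ring
  have hv : (1/(2*(m:ℝ)+1)) * (2*Real.log 2 + H 1 m)
      = (2*Real.log 2 + H 1 m)/(2*(m:ℝ)+1) := by ring
  rw [← hv]
  simpa only [heq] using comb

private lemma h1_le (n : ℕ) : h 1 n ≤ 2 * Real.sqrt n := by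
  induction n with
  | zero => simp [h]
  | succ n ih =>
    rw [h, Finset.sum_range_succ, ← h]
    have hs1 : Real.sqrt ((n:ℝ)+1) ^ 2 = (n:ℝ)+1 := Real.sq_sqrt (by positivity)
    have hs2 : Real.sqrt (n:ℝ) ^ 2 = (n:ℝ) := Real.sq_sqrt (by positivity)
    have hs1nn : 0 ≤ Real.sqrt ((n:ℝ)+1) := Real.sqrt_nonneg _
    have hs2nn : 0 ≤ Real.sqrt (n:ℝ) := Real.sqrt_nonneg _
    have hspos : 0 < Real.sqrt ((n:ℝ)+1) + Real.sqrt (n:ℝ) := by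
      have : 0 < Real.sqrt ((n:ℝ)+1) := Real.sqrt_pos.2 (by positivity)
      linarith
    have key : (Real.sqrt ((n:ℝ)+1) - Real.sqrt (n:ℝ))
        * (Real.sqrt ((n:ℝ)+1) + Real.sqrt (n:ℝ)) = 1 := by nlinarith
    have hub : Real.sqrt ((n:ℝ)+1) + Real.sqrt (n:ℝ) ≤ 2*(2*(n:ℝ)+1) := by
      have a1 : Real.sqrt ((n:ℝ)+1) ≤ (n:ℝ)+1 := by
        nlinarith [sq_nonneg (Real.sqrt ((n:ℝ)+1) - 1)]
      have a2 : Real.sqrt (n:ℝ) ≤ Real.sqrt ((n:ℝ)+1) := Real.sqrt_le_sqrt (by linarith)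
      nlinarith
    have step : (1:ℝ)/(2*(n:ℝ)+1) ≤ 2*(Real.sqrt ((n:ℝ)+1) - Real.sqrt (n:ℝ)) := by
      have hdiff : Real.sqrt ((n:ℝ)+1) - Real.sqrt (n:ℝ)
          = 1/(Real.sqrt ((n:ℝ)+1) + Real.sqrt (n:ℝ)) := by
        rw [eq_div_iff (ne_of_gt hspos)]; exact key
      rw [hdiff, mul_one_div, div_le_div_iff₀ (by positivity) hspos]
      linarith
    have cast1 : ((n+1:ℕ):ℝ) = (n:ℝ)+1 := by push_cast; ring
    rw [cast1]
    have : (1:ℝ)/(2*(n:ℝ)+1)^1 = 1/(2*(n:ℝ)+1) := by rw [pow_one]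
    rw [this]
    linarith

private lemma h_nonneg (n : ℕ) : 0 ≤ h 1 n :=
  Finset.sum_nonneg fun i _ => by positivity

private lemma summable_f (K : ℕ) :
    Summable (fun i : ℕ => h 1 (i+1) / ((((i:ℕ):ℝ)+1)*((K:ℝ)+(((i:ℕ):ℝ)+1)))) := by
  have hM : Summable (fun i : ℕ => 2 * ((1:ℝ)/(((i:ℝ)+1)^((3:ℝ)/2)))) := by
    have h0 : Summable (fun n : ℕ => (1:ℝ)/((n:ℝ)^((3:ℝ)/2))) :=
      Real.summable_one_div_nat_rpow.mpr (by norm_num)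
    have h1 : Summable (fun n : ℕ => (1:ℝ)/(((n+1:ℕ):ℝ)^((3:ℝ)/2))) :=
      (summable_nat_add_iff 1).mpr h0
    have h2 : Summable (fun n : ℕ => (1:ℝ)/(((n:ℝ)+1)^((3:ℝ)/2))) := by
      refine h1.congr fun n => ?_
      push_cast
      ring_nf
    exact h2.mul_left 2
  refine Summable.of_nonneg_of_le (fun i => ?_) (fun i => ?_) hM
  · have := h_nonneg (i+1); positivity
  · set x : ℝ := (i:ℝ)+1 with hx
    have hx0 : (0:ℝ) < x := by positivity
    set s : ℝ := Real.sqrt x with hsdef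
    have hs : s^2 = x := Real.sq_sqrt hx0.le
    have hs0 : 0 < s := Real.sqrt_pos.2 hx0
    have hb1 : h 1 (i+1) ≤ 2*s := by
      have := h1_le (i+1)
      have c1 : ((i+1:ℕ):ℝ) = x := by push_cast; rw [hx]
      rwa [c1] at this
    have hrp : x^((3:ℝ)/2) = x * s := by
      have h32 : (3:ℝ)/2 = 1 + 1/2 := by norm_num
      rw [h32, Real.rpow_add hx0, Real.rpow_one, hsdef, hx, ← Real.sqrt_eq_rpow]
    clear_value x s
    clear hsdef hx
    have step1 : h 1 (i+1) / (x*((K:ℝ)+x)) ≤ (2*s) * (1/(x*x)) := by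
      rw [div_eq_mul_one_div]
      apply mul_le_mul hb1
      · apply one_div_le_one_div_of_le
        · positivity
        · nlinarith [Nat.cast_nonneg (α := ℝ) K]
      · positivity
      · linarith
    have step2 : (2*s) * (1/(x*x)) = 2 * ((1:ℝ)/(x^((3:ℝ)/2))) := by
      have hxx : (x*x) ≠ 0 := by positivity
      have hxs : (x*s) ≠ 0 := by positivity
      rw [hrp, mul_one_div, mul_one_div, div_eq_div_iff hxx hxs]
      linear_combination 2*x*hs
    calc h 1 (i+1) / (x*((K:ℝ)+x)) ≤ (2*s) * (1/(x*x)) := step1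
      _ = 2 * ((1:ℝ)/(x^((3:ℝ)/2))) := step2

theorem stmt3 (k : ℕ+) :
    (∑' i : ℕ+, h 1 (i : ℕ) / (((i : ℕ) : ℝ) * (((k : ℕ) : ℝ) + ((i : ℕ) : ℝ))))
      = 2 * Real.log 2 * h 1 (k : ℕ) / ((k : ℕ) : ℝ)
        + (1 / ((k : ℕ) : ℝ)) * ∑ i ∈ Finset.range (k : ℕ), H 1 i / (2 * (i : ℝ) + 1) := by
  have hK : 0 < (k:ℕ) := k.pos
  have hKR : (0:ℝ) < ((k:ℕ):ℝ) := by exact_mod_cast hK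
  set F : ℕ → ℕ → ℝ := fun i j => if j ≤ i then
    (1/(2*(j:ℝ)+1)) * ((1:ℝ)/(((i:ℝ)+1)*(((k:ℕ):ℝ)+((i:ℝ)+1)))) else 0 with hF
  -- row sums
  have row : ∀ i : ℕ, HasSum (F i)
      (h 1 (i+1) / (((i:ℝ)+1)*(((k:ℕ):ℝ)+((i:ℝ)+1)))) := by
    intro i
    have hz : ∀ j ∉ range (i+1), F i j = 0 := by
      intro j hj
      simp only [hF]
      rw [if_neg]
      simpa [Nat.lt_succ_iff] using hj
    have hs := hasSum_sum_of_ne_finset_zero (L := SummationFilter.unconditional ℕ) hz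
    have hval : ∑ j ∈ range (i+1), F i j
        = h 1 (i+1) / (((i:ℝ)+1)*(((k:ℕ):ℝ)+((i:ℝ)+1))) := by
      have : ∀ j ∈ range (i+1), F i j
          = ((1:ℝ)/((2*(j:ℝ)+1)^1)) * ((1:ℝ)/(((i:ℝ)+1)*(((k:ℕ):ℝ)+((i:ℝ)+1)))) := by
        intro j hj
        simp only [hF]
        rw [if_pos (Nat.lt_succ_iff.mp (Finset.mem_range.mp hj)), pow_one]
      rw [Finset.sum_congr rfl this, ← Finset.sum_mul, ← h, mul_one_div]
    rwa [hval] at hs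
  -- column sums
  have col : ∀ j : ℕ, HasSum (fun i => F i j)
      ((1/(2*(j:ℝ)+1)) * ((1/((k:ℕ):ℝ)) * ∑ m ∈ range (k:ℕ), (1:ℝ)/((j:ℝ)+(m:ℝ)+1))) := by
    intro j
    set u : ℕ → ℝ := fun n => if j ≤ n then
      (1:ℝ)/(((n:ℝ)+1)*(((k:ℕ):ℝ)+((n:ℝ)+1))) else 0 with hu
    have hA := hasSum_col (k:ℕ) hK j
    have hA' : HasSum (fun n : ℕ => u (n + j))
        ((1/((k:ℕ):ℝ)) * ∑ m ∈ range (k:ℕ), (1:ℝ)/((j:ℝ)+(m:ℝ)+1)) := by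
      have hfe : (fun n : ℕ => u (n + j))
          = (fun n : ℕ => (1:ℝ)/((((n+j:ℕ):ℝ)+1)*(((k:ℕ):ℝ)+(((n+j:ℕ):ℝ)+1)))) := by
        funext n
        simp only [hu]
        rw [if_pos (Nat.le_add_left j n)]
      rw [hfe]
      exact hA
    have hu0 : ∑ i ∈ range j, u i = 0 := by
      apply Finset.sum_eq_zero
      intro i hi
      simp only [hu]
      rw [if_neg (by simpa using Finset.mem_range.mp hi)]
    have hU := (hasSum_nat_add_iff j).mp hA'
    rw [hu0, add_zero] at hU
    have hmul := hU.mul_left (1/(2*(j:ℝ)+1))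
    have hfe2 : (fun i : ℕ => (1/(2*(j:ℝ)+1)) * u i) = fun i => F i j := by
      funext i
      simp only [hF, hu, mul_ite, mul_zero]
    rwa [hfe2] at hmul
  -- summability of the double family
  have hnn : 0 ≤ fun p : ℕ × ℕ => F p.1 p.2 := by
    intro p
    simp only [hF]
    dsimp
    split
    · positivity
    · exact le_rfl
  have hunc : Summable (Function.uncurry F) := by
    refine (summable_prod_of_nonneg hnn).mpr ⟨fun i => (row i).summable, ?_⟩
    refine (summable_f (k:ℕ)).congr fun i => ?_
    exact ((row i).tsum_eq).symm
  -- main chain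
  have e1 : (∑' i : ℕ+, h 1 (i : ℕ) / (((i : ℕ) : ℝ) * (((k : ℕ) : ℝ) + ((i : ℕ) : ℝ))))
      = ∑' n : ℕ, h 1 (n+1) / (((n:ℝ)+1) * (((k:ℕ):ℝ) + ((n:ℝ)+1))) := by
    rw [← Equiv.tsum_eq Equiv.pnatEquivNat.symm
      (fun i : ℕ+ => h 1 (i : ℕ) / (((i : ℕ) : ℝ) * (((k : ℕ) : ℝ) + ((i : ℕ) : ℝ))))]
    refine tsum_congr fun n => ?_
    have hcoe : ((Equiv.pnatEquivNat.symm n : ℕ+) : ℕ) = n + 1 := by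
      simp [Equiv.pnatEquivNat, Nat.succPNat]
    rw [hcoe]
    push_cast
    ring_nf
  have e2 : (∑' n : ℕ, h 1 (n+1) / (((n:ℝ)+1) * (((k:ℕ):ℝ) + ((n:ℝ)+1))))
      = ∑' i : ℕ, ∑' j : ℕ, F i j :=
    tsum_congr fun i => ((row i).tsum_eq).symm
  have e3 : (∑' i : ℕ, ∑' j : ℕ, F i j) = ∑' j : ℕ, ∑' i : ℕ, F i j :=
    (Summable.tsum_comm hunc).symm
  have e4 : (∑' j : ℕ, ∑' i : ℕ, F i j)
      = ∑' j : ℕ, (1/((k:ℕ):ℝ)) * ∑ m ∈ range (k:ℕ),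
          (1:ℝ)/((2*(j:ℝ)+1)*((j:ℝ)+(m:ℝ)+1)) := by
    refine tsum_congr fun j => ?_
    rw [(col j).tsum_eq]
    rw [← mul_assoc, mul_comm (1/(2*(j:ℝ)+1)) (1/((k:ℕ):ℝ)), mul_assoc, Finset.mul_sum]
    congr 1
    refine Finset.sum_congr rfl fun m _ => ?_
    rw [div_mul_div_comm, one_mul]
  have e5 : (∑' j : ℕ, (1/((k:ℕ):ℝ)) * ∑ m ∈ range (k:ℕ),
        (1:ℝ)/((2*(j:ℝ)+1)*((j:ℝ)+(m:ℝ)+1)))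
      = (1/((k:ℕ):ℝ)) * ∑ m ∈ range (k:ℕ),
          ((2*Real.log 2 + H 1 m)/(2*(m:ℝ)+1)) := by
    rw [tsum_mul_left]
    congr 1
    rw [Summable.tsum_finsetSum (fun m _ => (hasSum_inner m).summable)]
    exact Finset.sum_congr rfl fun m _ => (hasSum_inner m).tsum_eq
  have hsplit : ∑ m ∈ range (k:ℕ), ((2*Real.log 2 + H 1 m)/(2*(m:ℝ)+1))
      = 2*Real.log 2 * h 1 (k:ℕ) + ∑ m ∈ range (k:ℕ), H 1 m/(2*(m:ℝ)+1) := by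
    have hterm : ∀ m ∈ range (k:ℕ), ((2*Real.log 2 + H 1 m)/(2*(m:ℝ)+1))
        = 2*Real.log 2 * ((1:ℝ)/((2*(m:ℝ)+1)^1)) + H 1 m/(2*(m:ℝ)+1) := by
      intro m _
      rw [pow_one]
      ring
    rw [Finset.sum_congr rfl hterm, Finset.sum_add_distrib, ← Finset.mul_sum, ← h]
  rw [e1, e2, e3, e4, e5, hsplit]
  ring
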